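/- Let X be a nonempty type and F, J : X → [0,∞] maps into the extended nonnegative reals. Assume there is x₀ ∈ X with J(x₀) = 0 and 0 < M₀ < ∞, where M₀ := F(x₀). Extend φ (taken with this value of M₀) to [0,∞] by φ(∞) := ∞. Then x* ∈ X minimizes F + J over X if and only if x* minimizes F + φ∘J over X; in particular the two problems have the same set of minimizers. (Equivalence of the original problem (P) with the surrogate problem (P̃) used by the algorithm, where F is the fidelity term, J = J_{α,β} the regularizer and x₀ = 0.) -/

import Mathlib

open scoped ENNReal NNReal

/-- The surrogate function `φ`, extended to `[0,∞]` by `φ(∞) := ∞`: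
`φ(t) = t` for `t ≤ M₀` and `φ(t) = (t² + M₀²)/(2M₀)` for `t > M₀`. -/
noncomputable def phiExt (M₀ : ℝ≥0∞) (t : ℝ≥0∞) : ℝ≥0∞ :=
  if t ≤ M₀ then t else (t ^ 2 + M₀ ^ 2) / (2 * M₀)

lemma ennreal_amgm (a b : ℝ≥0∞) : a * (2 * b) ≤ a ^ 2 + b ^ 2 := by
  rcases eq_or_ne a ⊤ with rfl | ha
  · simp [pow_two]
  rcases eq_or_ne b ⊤ with rfl | hb
  · simp [pow_two]
  lift a to ℝ≥0 using ha
  lift b to ℝ≥0 using hb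
  norm_cast
  rw [← NNReal.coe_le_coe]
  push_cast
  nlinarith [sq_nonneg ((a : ℝ) - b)]

lemma le_phiExt (M₀ t : ℝ≥0∞) (hpos : 0 < M₀) (hfin : M₀ < ⊤) : t ≤ phiExt M₀ t := by
  unfold phiExt
  split_ifs with h
  · exact le_rfl
  · rw [ENNReal.le_div_iff_mul_le (Or.inl (by simp [hpos.ne'])) (Or.inl (by
      simp [hfin.ne, (ENNReal.mul_eq_top)]))]
    exact ennreal_amgm t M₀

lemma phiExt_of_le {M₀ t : ℝ≥0∞} (h : t ≤ M₀) : phiExt M₀ t = t := if_pos h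

/-- Equivalence of the original problem (P) and the surrogate problem (P̃): with
`M₀ := F(x₀)` where `J(x₀) = 0` and `0 < M₀ < ⊤`, a point `x*` minimizes `F + J` iff it
minimizes `F + φ∘J`; in particular the two problems share the same minimizers. -/
theorem surrogate_problem_equivalence
    {X : Type*} [Nonempty X] (F J : X → ℝ≥0∞) (x₀ : X)
    (hJ0 : J x₀ = 0) (hM0pos : 0 < F x₀) (hM0fin : F x₀ < ⊤) (xstar : X) :
    (∀ x, F xstar + J xstar ≤ F x + J x) ↔
    (∀ x, F xstar + phiExt (F x₀) (J xstar) ≤ F x + phiExt (F x₀) (J x)) := by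
  set M₀ := F x₀ with hM₀
  have hphi0 : phiExt M₀ 0 = 0 := phiExt_of_le zero_le
  constructor
  · intro hmin x
    have hbound : F xstar + J xstar ≤ M₀ := by
      have := hmin x₀; rwa [hJ0, add_zero] at this
    have hJle : J xstar ≤ M₀ := le_trans (le_add_self) hbound
    rw [phiExt_of_le hJle]
    exact le_trans (hmin x) (add_le_add_right (le_phiExt M₀ (J x) hM0pos hM0fin) _)
  · intro hmin x
    have hbound : F xstar + phiExt M₀ (J xstar) ≤ M₀ := by
      have := hmin x₀; rwa [hJ0, hphi0, add_zero] at this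
    have hJle : J xstar ≤ M₀ :=
      le_trans (le_phiExt M₀ (J xstar) hM0pos hM0fin) (le_trans le_add_self hbound)
    have hstar : F xstar + J xstar ≤ M₀ := by rwa [phiExt_of_le hJle] at hbound
    rcases le_or_gt (J x) M₀ with h | h
    · have := hmin x
      rwa [phiExt_of_le hJle, phiExt_of_le h] at this
    · exact le_trans hstar (le_trans h.le (le_add_self))
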